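/- Let n ≥ 1 and let u : {1,…,n} × {1,2,…} → ℚ satisfy u(1,1) = 1, u(i,1) = 0 for 2 ≤ i ≤ n, and for p ≥ 2: u(1,p) = p + u(n,p−1) and u(i,p) = ((p+1)/p)·u(i−1,p−1) for 2 ≤ i ≤ n. Then for every i ∈ {1,…,n} and every p ≥ 1: p²/(n+1) − 2p ≤ u(i,p) ≤ p²/(n+1) + 2p + n. In particular u(i,p) = p²/(n+1) + O(p) for fixed n. -/

import Mathlib

open Finset


/-- If `p < i` the utility vanishes. -/
lemma stmt16_zero (n : ℕ) (u : ℕ → ℕ → ℚ)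
    (hi1 : ∀ i : ℕ, 2 ≤ i → i ≤ n → u i 1 = 0)
    (hreci : ∀ i p : ℕ, 2 ≤ i → i ≤ n → 2 ≤ p →
      u i p = (((p : ℚ) + 1) / (p : ℚ)) * u (i - 1) (p - 1)) :
    ∀ p i : ℕ, 2 ≤ i → i ≤ n → 1 ≤ p → p < i → u i p = 0 := by
  intro p
  induction p with
  | zero => intro i _ _ h; omega
  | succ p ih =>
    intro i h2 hin _ hpi
    rcases Nat.eq_zero_or_pos p with hp | hp
    · subst hp; exact hi1 i h2 hin
    · rw [hreci i (p+1) h2 hin (by omega)]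
      have : u (i-1) ((p+1)-1) = 0 := by
        have := ih (i-1) (by omega) (by omega) (by omega) (by omega)
        simpa using this
      rw [this, mul_zero]

/-- Explicit formula reducing `u i` to `u 1`. -/
lemma stmt16_formula (n : ℕ) (u : ℕ → ℕ → ℚ)
    (hreci : ∀ i p : ℕ, 2 ≤ i → i ≤ n → 2 ≤ p →
      u i p = (((p : ℚ) + 1) / (p : ℚ)) * u (i - 1) (p - 1)) :
    ∀ i q : ℕ, 1 ≤ i → i ≤ n → 1 ≤ q →
      u i (q + i - 1) = ((q : ℚ) + (i : ℚ)) / ((q : ℚ) + 1) * u 1 q := by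
  intro i
  induction i with
  | zero => intro q h; omega
  | succ i ih =>
    intro q _ hin hq
    rcases Nat.eq_zero_or_pos i with hi | hi
    · subst hi
      simp only [Nat.add_sub_cancel]
      have hq1 : ((q : ℚ) + 1) ≠ 0 := by positivity
      rw [Nat.cast_one, div_self hq1, one_mul]
    · have hqi : (2 : ℕ) ≤ q + i := by omega
      have h1 : u (i+1) (q + (i+1) - 1) = (((q+i : ℕ) : ℚ) + 1) / ((q+i : ℕ) : ℚ) * u i (q + i - 1) := by
        have := hreci (i+1) (q+i) (by omega) hin hqi
        have e1 : q + (i+1) - 1 = q + i := by omega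
        have e2 : (i+1) - 1 = i := by omega
        have e3 : (q+i) - 1 = q + i - 1 := rfl
        rw [e1, this, e2]
      rw [h1, ih q hi (by omega) hq]
      have hq1 : ((q : ℚ) + 1) ≠ 0 := by positivity
      have hqi0 : ((q : ℚ) + (i : ℚ)) ≠ 0 := by
        have : (1:ℚ) ≤ (q:ℚ) := by exact_mod_cast hq
        have : (0:ℚ) ≤ (i:ℚ) := by positivity
        nlinarith [show (1:ℚ) ≤ (q:ℚ) from by exact_mod_cast hq]
      push_cast
      field_simp
      ring

/-- Recursion for `u 1` with step `n`. -/
lemma stmt16_vrec (n : ℕ) (hn : 1 ≤ n) (u : ℕ → ℕ → ℚ)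
    (hrec1 : ∀ p : ℕ, 2 ≤ p → u 1 p = (p : ℚ) + u n (p - 1))
    (hreci : ∀ i p : ℕ, 2 ≤ i → i ≤ n → 2 ≤ p →
      u i p = (((p : ℚ) + 1) / (p : ℚ)) * u (i - 1) (p - 1)) :
    ∀ q : ℕ, 1 ≤ q →
      u 1 (q + n) = ((q : ℚ) + (n : ℚ)) + ((q : ℚ) + (n : ℚ)) / ((q : ℚ) + 1) * u 1 q := by
  intro q hq
  have h1 := hrec1 (q + n) (by omega)
  have h2 := stmt16_formula n u hreci n q hn le_rfl hq
  have e : (q + n) - 1 = q + n - 1 := rfl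
  rw [h1, show q + n - 1 = q + n - 1 from rfl, h2]
  push_cast
  ring

/-- `u 1 p = p` for `p ≤ n`. -/
lemma stmt16_vsmall (n : ℕ) (u : ℕ → ℕ → ℚ)
    (h11 : u 1 1 = 1)
    (hi1 : ∀ i : ℕ, 2 ≤ i → i ≤ n → u i 1 = 0)
    (hrec1 : ∀ p : ℕ, 2 ≤ p → u 1 p = (p : ℚ) + u n (p - 1))
    (hreci : ∀ i p : ℕ, 2 ≤ i → i ≤ n → 2 ≤ p →
      u i p = (((p : ℚ) + 1) / (p : ℚ)) * u (i - 1) (p - 1)) :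
    ∀ p : ℕ, 1 ≤ p → p ≤ n → u 1 p = (p : ℚ) := by
  intro p hp hpn
  rcases Nat.lt_or_ge p 2 with h2 | h2
  · have : p = 1 := by omega
    subst this; simpa using h11
  · rw [hrec1 p h2]
    have hz : u n (p - 1) = 0 := stmt16_zero n u hi1 hreci (p-1) n (by omega) le_rfl (by omega) (by omega)
    rw [hz, add_zero]

/-- Bounds on `u 1 q`, multiplied through by `n+1`. -/
lemma stmt16_gbound (n : ℕ) (hn : 1 ≤ n) (u : ℕ → ℕ → ℚ)
    (h11 : u 1 1 = 1)
    (hi1 : ∀ i : ℕ, 2 ≤ i → i ≤ n → u i 1 = 0)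
    (hrec1 : ∀ p : ℕ, 2 ≤ p → u 1 p = (p : ℚ) + u n (p - 1))
    (hreci : ∀ i p : ℕ, 2 ≤ i → i ≤ n → 2 ≤ p →
      u i p = (((p : ℚ) + 1) / (p : ℚ)) * u (i - 1) (p - 1)) :
    ∀ q : ℕ, 1 ≤ q →
      0 ≤ u 1 q ∧
      ((q : ℚ) - (n : ℚ) - 1) * ((q : ℚ) + 1) ≤ ((n : ℚ) + 1) * u 1 q ∧
      ((n : ℚ) + 1) * u 1 q ≤ ((q : ℚ) + (n : ℚ) + 1) * ((q : ℚ) + 1) := by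
  intro q
  induction q using Nat.strong_induction_on with
  | _ q ih =>
    intro hq
    have hN : (1:ℚ) ≤ (n:ℚ) := by exact_mod_cast hn
    rcases le_or_gt q n with hqn | hqn
    · -- base case: u 1 q = q
      have hv : u 1 q = (q:ℚ) := stmt16_vsmall n u h11 hi1 hrec1 hreci q hq hqn
      have hQ : (1:ℚ) ≤ (q:ℚ) := by exact_mod_cast hq
      have hQN : (q:ℚ) ≤ (n:ℚ) := by exact_mod_cast hqn
      refine ⟨by rw [hv]; positivity, ?_, ?_⟩ <;> rw [hv] <;> nlinarith
    · -- inductive step: q = q' + n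
      set q' := q - n with hq'def
      have hq'1 : 1 ≤ q' := by omega
      have hqeq : q = q' + n := by omega
      have hQ' : (1:ℚ) ≤ (q':ℚ) := by exact_mod_cast hq'1
      obtain ⟨hc0, hlb, hub⟩ := ih q' (by omega) hq'1
      have hv := stmt16_vrec n hn u hrec1 hreci q' hq'1
      rw [← hqeq] at hv
      set c := u 1 q' with hc
      set r : ℚ := ((q':ℚ) + (n:ℚ)) / ((q':ℚ) + 1) with hrdef
      have hQ1 : (0:ℚ) < (q':ℚ) + 1 := by linarith
      have hr : r * ((q':ℚ) + 1) = (q':ℚ) + (n:ℚ) := by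
        rw [hrdef]; field_simp
      have hr0 : (0:ℚ) ≤ r := by
        rw [hrdef]; positivity
      have hQcast : (q:ℚ) = (q':ℚ) + (n:ℚ) := by rw [hqeq]; push_cast; ring
      have hvq : u 1 q = ((q':ℚ) + (n:ℚ)) + r * c := by rw [hv]
      have key_ub : r * (((n:ℚ)+1) * c) ≤ r * (((q':ℚ) + (n:ℚ) + 1) * ((q':ℚ) + 1)) :=
        mul_le_mul_of_nonneg_left hub hr0
      have key_lb : r * (((q':ℚ) - (n:ℚ) - 1) * ((q':ℚ) + 1)) ≤ r * (((n:ℚ)+1) * c) :=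
        mul_le_mul_of_nonneg_left hlb hr0
      have key2 : r * (((q':ℚ) + (n:ℚ) + 1) * ((q':ℚ) + 1)) = ((q':ℚ) + (n:ℚ) + 1) * ((q':ℚ) + (n:ℚ)) := by
        rw [show r * (((q':ℚ) + (n:ℚ) + 1) * ((q':ℚ) + 1)) = ((q':ℚ) + (n:ℚ) + 1) * (r * ((q':ℚ) + 1)) by ring, hr]
      have key3 : r * (((q':ℚ) - (n:ℚ) - 1) * ((q':ℚ) + 1)) = ((q':ℚ) - (n:ℚ) - 1) * ((q':ℚ) + (n:ℚ)) := by
        rw [show r * (((q':ℚ) - (n:ℚ) - 1) * ((q':ℚ) + 1)) = ((q':ℚ) - (n:ℚ) - 1) * (r * ((q':ℚ) + 1)) by ring, hr]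
      refine ⟨?_, ?_, ?_⟩
      · rw [hvq]
        have : (0:ℚ) ≤ r * c := mul_nonneg hr0 hc0
        linarith
      · rw [hvq, hQcast]; nlinarith [key_lb, key3]
      · rw [hvq, hQcast]; nlinarith [key_ub, key2]

/-- Let `n ≥ 1` and let `u : {1,…,n} × {1,2,…} → ℚ` satisfy
`u(1,1) = 1`, `u(i,1) = 0` for `2 ≤ i ≤ n`, and for `p ≥ 2`:
`u(1,p) = p + u(n,p−1)` and `u(i,p) = ((p+1)/p)·u(i−1,p−1)` for `2 ≤ i ≤ n`
(these are the expected Borda utilities under the strictly alternating policy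
`123…n123…n…`).  Then for every `i ∈ {1,…,n}` and every `p ≥ 1`:
`p²/(n+1) − 2p ≤ u(i,p) ≤ p²/(n+1) + 2p + n`; in particular
`u(i,p) = p²/(n+1) + O(p)` for fixed `n`. -/
theorem stmt16 (n : ℕ) (hn : 1 ≤ n) (u : ℕ → ℕ → ℚ)
    (h11 : u 1 1 = 1)
    (hi1 : ∀ i : ℕ, 2 ≤ i → i ≤ n → u i 1 = 0)
    (hrec1 : ∀ p : ℕ, 2 ≤ p → u 1 p = (p : ℚ) + u n (p - 1))
    (hreci : ∀ i p : ℕ, 2 ≤ i → i ≤ n → 2 ≤ p →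
      u i p = (((p : ℚ) + 1) / (p : ℚ)) * u (i - 1) (p - 1)) :
    ∀ i p : ℕ, 1 ≤ i → i ≤ n → 1 ≤ p →
      (p : ℚ) ^ 2 / ((n : ℚ) + 1) - 2 * (p : ℚ) ≤ u i p ∧
      u i p ≤ (p : ℚ) ^ 2 / ((n : ℚ) + 1) + 2 * (p : ℚ) + (n : ℚ) := by
  intro i p hi hin hp
  have hN : (1:ℚ) ≤ (n:ℚ) := by exact_mod_cast hn
  have hN1 : (0:ℚ) < (n:ℚ) + 1 := by linarith
  have hP : (1:ℚ) ≤ (p:ℚ) := by exact_mod_cast hp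
  rcases Nat.lt_or_ge p i with hpi | hpi
  · -- p < i : u i p = 0
    have hz : u i p = 0 := stmt16_zero n u hi1 hreci p i (by omega) hin hp hpi
    rw [hz]
    constructor
    · have hpn : (p:ℚ) ≤ (n:ℚ) := by exact_mod_cast (show p ≤ n by omega)
      have h1 : (p:ℚ)^2 / ((n:ℚ)+1) ≤ 2 * (p:ℚ) := by
        rw [div_le_iff₀ hN1]; nlinarith
      linarith
    · positivity
  · -- i ≤ p
    set q := p - i + 1 with hqdef
    have hq1 : 1 ≤ q := by omega
    have hqi : q + i - 1 = p := by omega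
    have hform := stmt16_formula n u hreci i q hi hin hq1
    rw [hqi] at hform
    obtain ⟨hc0, hlb, hub⟩ := stmt16_gbound n hn u h11 hi1 hrec1 hreci q hq1
    set c := u 1 q with hc
    have hQI : (q:ℚ) + (i:ℚ) = (p:ℚ) + 1 := by
      have : q + i = p + 1 := by omega
      exact_mod_cast congrArg (Nat.cast : ℕ → ℚ) this
    have hQ1 : (0:ℚ) < (q:ℚ) + 1 := by positivity
    set r : ℚ := ((q:ℚ) + (i:ℚ)) / ((q:ℚ) + 1) with hrdef
    have hr : r * ((q:ℚ) + 1) = (p:ℚ) + 1 := by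
      rw [hrdef, hQI]; field_simp
    have hr0 : (0:ℚ) ≤ r := by
      rw [hrdef, hQI]; positivity
    have hu : u i p = r * c := hform
    have hQle : (q:ℚ) ≤ (p:ℚ) := by exact_mod_cast (show q ≤ p by omega)
    have hQge : (p:ℚ) + 1 - (n:ℚ) ≤ (q:ℚ) := by
      have hI : (i:ℚ) ≤ (n:ℚ) := by exact_mod_cast hin
      linarith [hQI]
    have key_ub : r * (((n:ℚ)+1) * c) ≤ ((q:ℚ) + (n:ℚ) + 1) * ((p:ℚ) + 1) := by
      calc r * (((n:ℚ)+1) * c) ≤ r * (((q:ℚ) + (n:ℚ) + 1) * ((q:ℚ) + 1)) :=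
            mul_le_mul_of_nonneg_left hub hr0
        _ = ((q:ℚ) + (n:ℚ) + 1) * (r * ((q:ℚ) + 1)) := by ring
        _ = ((q:ℚ) + (n:ℚ) + 1) * ((p:ℚ) + 1) := by rw [hr]
    have key_lb : ((q:ℚ) - (n:ℚ) - 1) * ((p:ℚ) + 1) ≤ r * (((n:ℚ)+1) * c) := by
      calc ((q:ℚ) - (n:ℚ) - 1) * ((p:ℚ) + 1) = ((q:ℚ) - (n:ℚ) - 1) * (r * ((q:ℚ)+1)) := by rw [hr]
        _ = r * (((q:ℚ) - (n:ℚ) - 1) * ((q:ℚ) + 1)) := by ring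
        _ ≤ r * (((n:ℚ)+1) * c) := mul_le_mul_of_nonneg_left hlb hr0
    rw [hu]
    constructor
    · rw [show (p:ℚ)^2 / ((n:ℚ)+1) - 2*(p:ℚ) = ((p:ℚ)^2 - 2*(p:ℚ)*((n:ℚ)+1)) / ((n:ℚ)+1) from by field_simp,
        div_le_iff₀ hN1]
      rcases le_total ((p:ℚ)) (2*((n:ℚ)+1)) with hcase | hcase
      · have : (0:ℚ) ≤ r * c := mul_nonneg hr0 hc0
        nlinarith
      · nlinarith [key_lb]
    · rw [show (p:ℚ)^2 / ((n:ℚ)+1) + 2*(p:ℚ) + (n:ℚ) = ((p:ℚ)^2 + (2*(p:ℚ)+(n:ℚ))*((n:ℚ)+1)) / ((n:ℚ)+1) from by field_simp; ring,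
        le_div_iff₀ hN1]
      nlinarith [key_ub]
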